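/- Let T be a tree, let U ⊆ V(T) be an infinite set of vertices, and let H be the convex hull of U in T. Suppose R* = (v*_1, v*_2, ...) is a ray which is a subgraph of H and V(R*) ∩ U = ∅. Then there are infinitely many n ∈ ℕ with n ≥ 2 such that the degree of v*_n in H is at least 3. -/

import Mathlib

open SimpleGraph

/-- `d` is an ultrametric on `V`: a metric satisfying the strong triangle inequality. -/
def IsUltrametricOn {V : Type*} (d : V → V → ℝ) : Prop :=
  (∀ x y, 0 ≤ d x y) ∧ (∀ x y, d x y = d y x) ∧
    (∀ x y, d x y = 0 ↔ x = y) ∧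
    ∀ x y z, d x y ≤ max (d x z) (d z y)

/-- The vertex labeling `l` of the graph `G` is non-degenerate:
`max {l u, l v} > 0` for every edge `{u, v}`. -/
def NondegenerateLabeling {V : Type*} (G : SimpleGraph V) (l : V → ℝ) : Prop :=
  ∀ u v, G.Adj u v → 0 < max (l u) (l v)

/-- `d` is the function `d_l` generated by the vertex labeling `l` on the tree `G`:
`d u u = 0`, and for `u ≠ v`, `d u v` is the maximum of the labels of the vertices of
the (unique) path joining `u` and `v`. -/
def IsLabelDist {V : Type*} (G : SimpleGraph V) (l : V → ℝ) (d : V → V → ℝ) : Prop :=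
  (∀ u, d u u = 0) ∧
    ∀ u v : V, u ≠ v → ∀ p : G.Walk u v, p.IsPath →
      IsGreatest (l '' {w | w ∈ p.support}) (d u v)

/-- `x` is a Cauchy sequence with respect to the distance function `d`. -/
def CauchyWith {V : Type*} (d : V → V → ℝ) (x : ℕ → V) : Prop :=
  ∀ ε : ℝ, 0 < ε → ∃ N : ℕ, ∀ m ≥ N, ∀ n ≥ N, d (x m) (x n) < ε

/-- The set `A` is totally bounded with respect to the distance function `d`:
for every `r > 0` it is covered by finitely many open balls of radius `r` centered in `A`. -/
def TotallyBoundedWith {V : Type*} (d : V → V → ℝ) (A : Set V) : Prop :=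
  ∀ r : ℝ, 0 < r → ∃ s : Finset V, ↑s ⊆ A ∧ ∀ x ∈ A, ∃ c ∈ s, d c x < r

/-- The space `V` with distance `d` is compact: every cover of `V` by open balls
(given by center–radius pairs) contains a finite subcover. -/
def CompactWith {V : Type*} (d : V → V → ℝ) : Prop :=
  ∀ F : Set (V × ℝ), (∀ x : V, ∃ p ∈ F, d p.1 x < p.2) →
    ∃ s : Finset (V × ℝ), ↑s ⊆ F ∧ ∀ x : V, ∃ p ∈ s, d p.1 x < p.2

/-- The subgraph `R` of `G` is a ray: its vertices can be enumerated as a sequence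
`f 0, f 1, …` of pairwise distinct vertices, with edges exactly `{f n, f (n+1)}`. -/
def IsRaySubgraph {V : Type*} {G : SimpleGraph V} (R : G.Subgraph) : Prop :=
  ∃ f : ℕ → V, Function.Injective f ∧ R.verts = Set.range f ∧
    ∀ x y, R.Adj x y ↔ ∃ n, (x = f n ∧ y = f (n + 1)) ∨ (x = f (n + 1) ∧ y = f n)

/-- The subgraph `T₀` of `G` is a finite subtree. -/
def IsFiniteSubtree {V : Type*} {G : SimpleGraph V} (T₀ : G.Subgraph) : Prop :=
  T₀.verts.Finite ∧ T₀.coe.IsTree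

/-- The subgraph `H` of `G` is almost a ray: `H` is the union of a ray and a finite subtree. -/
def IsAlmostRaySubgraph {V : Type*} {G : SimpleGraph V} (H : G.Subgraph) : Prop :=
  ∃ R T₀ : G.Subgraph, IsRaySubgraph R ∧ IsFiniteSubtree T₀ ∧ T₀ ⊔ R = H

/-- The graph `G` is almost a ray: `G` is the union of a ray and a finite subtree. -/
def IsAlmostRayGraph {V : Type*} (G : SimpleGraph V) : Prop :=
  ∃ R T₀ : G.Subgraph, IsRaySubgraph R ∧ IsFiniteSubtree T₀ ∧ T₀ ⊔ R = ⊤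

/-- `H` is the convex hull of the vertex set `A` in `G`: a subtree containing `A`
which is a subgraph of every subtree of `G` containing `A`. -/
def IsConvexHullSubtree {V : Type*} (G : SimpleGraph V) (A : Set V) (H : G.Subgraph) : Prop :=
  H.coe.IsTree ∧ A ⊆ H.verts ∧
    ∀ H' : G.Subgraph, H'.coe.IsTree → A ⊆ H'.verts → H ≤ H'


/-- Let `H` be the convex hull of an infinite set `U` of vertices of a tree
`T`, and let `R* = (f 0, f 1, …)` be a ray which is a subgraph of `H` with
`V(R*) ∩ U = ∅`. Then there are infinitely many `n ≥ 1` (i.e. vertices other than the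
first one) such that the degree of `f n` in `H` is at least `3`. -/
theorem stmt14 {V : Type*} (G : SimpleGraph V) (hG : G.IsTree)
    (U : Set V) (hU : U.Infinite)
    (H : G.Subgraph) (hH : IsConvexHullSubtree G U H)
    (R : G.Subgraph) (f : ℕ → V) (hf : Function.Injective f)
    (hverts : R.verts = Set.range f)
    (hadj : ∀ x y, R.Adj x y ↔ ∃ n, (x = f n ∧ y = f (n + 1)) ∨ (x = f (n + 1) ∧ y = f n))
    (hRH : R ≤ H) (hdisj : Set.range f ∩ U = ∅) :
    {n : ℕ | 1 ≤ n ∧ 3 ≤ (H.neighborSet (f n)).encard}.Infinite := by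
  classical
  by_contra hinf
  rw [Set.not_infinite] at hinf
  obtain ⟨htree, hUH, hmin⟩ := hH
  obtain ⟨B, hB⟩ := hinf.bddAbove
  set N := B + 1 with hNdef
  have hN : ∀ n, N < n → (H.neighborSet (f n)).encard < 3 := by
    intro n hn
    by_contra h
    push_neg at h
    have hmem : n ∈ {n : ℕ | 1 ≤ n ∧ 3 ≤ (H.neighborSet (f n)).encard} := ⟨by omega, h⟩
    have := hB hmem
    omega
  have hAdjR : ∀ n, H.Adj (f n) (f (n + 1)) := fun n =>
    hRH.2 ((hadj _ _).2 ⟨n, Or.inl ⟨rfl, rfl⟩⟩)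
  have hfv : ∀ n, f n ∈ H.verts := fun n => hRH.1 (hverts ▸ Set.mem_range_self n)
  have hNbr : ∀ m, N ≤ m → H.neighborSet (f (m + 1)) = {f m, f (m + 2)} := by
    intro m hm
    have h3 := hN (m + 1) (by omega)
    have hfin : (H.neighborSet (f (m + 1))).Finite :=
      Set.encard_lt_top_iff.1 (lt_of_lt_of_le h3 le_top)
    have hsub : ({f m, f (m + 2)} : Set V) ⊆ H.neighborSet (f (m + 1)) := by
      rintro x (rfl | rfl)
      · exact (hAdjR m).symm
      · exact hAdjR (m + 1)
    have hpair : ({f m, f (m + 2)} : Set V).encard = 2 :=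
      Set.encard_pair (fun h => by have := hf h; omega)
    refine (hfin.eq_of_subset_of_encard_le' hsub ?_).symm
    rw [hpair]
    exact Order.le_of_lt_succ h3
  set Tl : Set V := {x | ∃ m, N < m ∧ x = f m} with hTl
  -- paths between non-tail vertices avoid the tail
  have key : ∀ (a b : H.verts) (p : H.coe.Walk a b), p.IsPath →
      (a : V) ∉ Tl → (b : V) ∉ Tl → ∀ x ∈ p.support, (x : V) ∉ Tl := by
    intro a b p hp ha hb
    by_contra hcon
    push_neg at hcon
    obtain ⟨x, hxs, hxT⟩ := hcon
    set S : Set ℕ := {m | N < m ∧ ∃ y ∈ p.support, (y : V) = f m} with hSdef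
    have hSne : S.Nonempty := by
      obtain ⟨m, hm, hxm⟩ := hxT
      exact ⟨m, hm, x, hxs, hxm⟩
    have hSfin : S.Finite := by
      have hsub : S ⊆ f ⁻¹' {v | ∃ y ∈ p.support, (y : V) = v} := fun m hm => hm.2
      refine Set.Finite.subset (Set.Finite.preimage hf.injOn ?_) hsub
      have heq : {v | ∃ y ∈ p.support, (y : V) = v} = Subtype.val '' {y | y ∈ p.support} := by
        ext v; simp [Set.mem_image]
      rw [heq]
      exact (p.support.finite_toSet).image _
    obtain ⟨m, hmS, hmax⟩ := Set.Finite.exists_maximalFor id S hSfin hSne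
    obtain ⟨hmN, w, hws, hwv⟩ := hmS
    have haw : a ≠ w := by
      rintro rfl; exact ha ⟨m, hmN, hwv⟩
    have hbw : b ≠ w := by
      rintro rfl; exact hb ⟨m, hmN, hwv⟩
    set q := p.takeUntil w hws with hqdef
    set r := p.dropUntil w hws with hrdef
    have hspec := p.take_spec hws
    have hnodup : (q.append r).support.Nodup := by
      rw [hspec]; exact hp.support_nodup
    rw [Walk.support_append, List.nodup_append] at hnodup
    obtain ⟨c, hwc, q', hq'⟩ := Walk.exists_eq_cons_of_ne (Ne.symm haw) q.reverse
    obtain ⟨d, hwd, r', hr'⟩ := Walk.exists_eq_cons_of_ne (Ne.symm hbw) r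
    have hcq : c ∈ q.support := by
      have : c ∈ q.reverse.support := by rw [hq']; simp [Walk.start_mem_support]
      rwa [Walk.support_reverse, List.mem_reverse] at this
    have hdr : d ∈ r.support.tail := by
      rw [hr']; simp [Walk.start_mem_support]
    have hcd : c ≠ d := fun h => hnodup.2.2 c hcq d hdr h
    obtain ⟨m', rfl⟩ : ∃ m', m = m' + 1 := ⟨m - 1, by omega⟩
    have hnb := hNbr m' (by omega)
    have hc2 : (c : V) ∈ ({f m', f (m' + 2)} : Set V) := by
      rw [← hnb, ← hwv]
      exact hwc
    have hd2 : (d : V) ∈ ({f m', f (m' + 2)} : Set V) := by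
      rw [← hnb, ← hwv]
      exact hwd
    have hcdv : (c : V) ≠ (d : V) := fun h => hcd (Subtype.ext h)
    have hcase : (c : V) = f (m' + 2) ∨ (d : V) = f (m' + 2) := by
      rcases hc2 with h1 | h1
      · rcases hd2 with h2 | h2
        · exact absurd (h1.trans h2.symm) hcdv
        · exact Or.inr h2
      · exact Or.inl h1
    have hmem2 : ∃ y ∈ p.support, (y : V) = f (m' + 2) := by
      rcases hcase with h | h
      · exact ⟨c, Walk.support_takeUntil_subset p hws hcq, h⟩
      · exact ⟨d, Walk.support_dropUntil_subset p hws (List.tail_subset _ hdr), h⟩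
    have : (m' + 2) ∈ S := ⟨by omega, hmem2⟩
    have := hmax this (Nat.le_succ _)
    simp at this
  -- the pruned subgraph
  let H' : G.Subgraph :=
    { verts := H.verts \ Tl
      Adj := fun a b => H.Adj a b ∧ a ∉ Tl ∧ b ∉ Tl
      adj_sub := fun h => H.adj_sub h.1
      edge_vert := fun h => ⟨H.edge_vert h.1, h.2.1⟩
      symm := ⟨fun a b h => ⟨h.1.symm, h.2.2, h.2.1⟩⟩ }
  have transfer : ∀ (a b : H.verts) (p : H.coe.Walk a b), (∀ x ∈ p.support, (x : V) ∉ Tl) →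
      ∀ (ha : (a : V) ∈ H'.verts) (hb : (b : V) ∈ H'.verts),
        Nonempty (H'.coe.Walk ⟨a, ha⟩ ⟨b, hb⟩) := by
    intro a b p
    induction p with
    | nil => intro _ ha hb; exact ⟨Walk.nil⟩
    | @cons u v w h p ih =>
      intro hsup ha hb
      have hv : (v : V) ∉ Tl := hsup v (by simp)
      have hvmem : (v : V) ∈ H'.verts := ⟨v.2, hv⟩
      have hadj' : H'.coe.Adj ⟨u, ha⟩ ⟨v, hvmem⟩ := ⟨h, ha.2, hv⟩
      obtain ⟨qq⟩ := ih (fun x hx => hsup x (by simp [hx])) hvmem hb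
      exact ⟨Walk.cons hadj' qq⟩
  have hUsub : U ⊆ H'.verts := by
    intro u hu
    refine ⟨hUH hu, ?_⟩
    rintro ⟨m, hm, rfl⟩
    exact (Set.eq_empty_iff_forall_notMem.1 hdisj (f m)) ⟨Set.mem_range_self m, hu⟩
  have hne' : H'.verts.Nonempty := by
    obtain ⟨u, hu⟩ := hU.nonempty
    exact ⟨u, hUsub hu⟩
  have hconn' : H'.coe.Connected := by
    haveI := hne'.to_subtype
    refine ⟨fun x y => ?_⟩
    have hx : (x : V) ∈ H.verts := x.2.1
    have hy : (y : V) ∈ H.verts := y.2.1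
    obtain ⟨p⟩ := htree.isConnected.preconnected ⟨x, hx⟩ ⟨y, hy⟩
    have hsup := key _ _ p.toPath.1 p.toPath.2 x.2.2 y.2.2
    obtain ⟨qq⟩ := transfer _ _ p.toPath.1 hsup x.2 y.2
    exact ⟨qq⟩
  have hacyc : H'.coe.IsAcyclic := by
    intro v c hc
    exact hG.IsAcyclic _ (hc.map Subgraph.hom_injective)
  have hle := hmin H' ⟨hconn', hacyc⟩ hUsub
  have hmem : f (N + 1) ∈ H'.verts := hle.1 (hfv (N + 1))
  exact hmem.2 ⟨N + 1, by omega, rfl⟩
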